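/- Let G be a Polish group that is Weil complete, i.e., complete in its left uniformity. If A, B ⊆ G are Roelcke precompact subsets, then the product set AB = {a*b : a ∈ A, b ∈ B} is Roelcke precompact. -/

import Mathlib

open scoped Pointwise
open Filter Set
open scoped Uniformity

/-- A subset `A` of a topological group `G` is *Roelcke precompact* if for every
neighborhood `V` of the identity there is a finite set `F ⊆ G` with `A ⊆ V * F * V`,
where `V * F * V = {v * f * w : v, w ∈ V, f ∈ F}`. -/
def RoelckePrecompact {G : Type*} [Group G] [TopologicalSpace G] (A : Set G) : Prop :=
  ∀ V ∈ nhds (1 : G), ∃ F : Finset G, A ⊆ V * (F : Set G) * V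

/-- The left uniformity of a topological group: the pullback under inversion of the
right uniformity `IsTopologicalGroup.rightUniformSpace G`; its basic entourages are the sets
`{(f,g) | f⁻¹ * g ∈ V}` for `V` a neighborhood of the identity. -/
noncomputable def leftUniformity (G : Type*) [Group G] [TopologicalSpace G]
    [IsTopologicalGroup G] : UniformSpace G :=
  UniformSpace.comap (fun g : G => g⁻¹) (IsTopologicalGroup.rightUniformSpace G)

section Aux

variable {G : Type*} [Group G] [ts : TopologicalSpace G] [IsTopologicalGroup G]

lemma RP.mono {A B : Set G} (h : A ⊆ B) (hB : RoelckePrecompact B) : RoelckePrecompact A :=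
  fun V hV => (hB V hV).imp fun _F hF => h.trans hF

lemma IsCompact.roelckePrecompact {K : Set G} (hK : IsCompact K) : RoelckePrecompact K := by
  intro V hV
  have h1 : (1 : G) ∈ V := mem_of_mem_nhds hV
  obtain ⟨t, -, ht⟩ := hK.elim_nhds_subcover (fun x => x • V)
    (fun x _ => by simpa using smul_mem_nhds_smul x hV)
  refine ⟨t, fun y hy => ?_⟩
  obtain ⟨x, hx, hyx⟩ := mem_iUnion₂.1 (ht hy)
  obtain ⟨v, hv, rfl⟩ := hyx
  exact ⟨1 * x, Set.mul_mem_mul h1 hx, v, hv, by simp [smul_eq_mul]⟩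

lemma topR_eq : (IsTopologicalGroup.rightUniformSpace G).toTopologicalSpace = ts := rfl

lemma topL_eq : (leftUniformity G).toTopologicalSpace = ts := by
  rw [leftUniformity, UniformSpace.toTopologicalSpace_comap, topR_eq]
  exact (Homeomorph.inv G).induced_eq

lemma uR_eq : 𝓤[IsTopologicalGroup.rightUniformSpace G]
    = comap (fun p : G × G => p.2 / p.1) (nhds 1) := by simp_rw [div_eq_mul_inv]; rfl

lemma uL_eq : 𝓤[leftUniformity G] = comap (fun p : G × G => p.2⁻¹ * p.1) (nhds 1) := by
  rw [leftUniformity, uniformity_comap, uR_eq, comap_comap]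
  congr 1
  funext p
  simp [div_eq_mul_inv]

lemma completeR (hWeil : @CompleteSpace G (leftUniformity G)) :
    @CompleteSpace G (IsTopologicalGroup.rightUniformSpace G) := by
  have hinvinv : ((fun g : G => g⁻¹) ∘ fun g : G => g⁻¹) = id := by funext g; simp
  have huc1 : @UniformContinuous G G (leftUniformity G) (IsTopologicalGroup.rightUniformSpace G)
      (fun g => g⁻¹) := by
    rw [uniformContinuous_iff]
    exact le_of_eq rfl
  have hLC : (leftUniformity G).comap (fun g : G => g⁻¹) = IsTopologicalGroup.rightUniformSpace G := by
    rw [leftUniformity, ← UniformSpace.comap_comap, hinvinv]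
    exact congrFun uniformSpace_comap_id _
  have huc2 : @UniformContinuous G G (IsTopologicalGroup.rightUniformSpace G) (leftUniformity G)
      (fun g => g⁻¹) := by
    rw [uniformContinuous_iff, hLC]
  exact (@UniformEquiv.completeSpace_iff G G (leftUniformity G) (IsTopologicalGroup.rightUniformSpace G)
    (@UniformEquiv.mk G G (leftUniformity G) (IsTopologicalGroup.rightUniformSpace G)
      (Equiv.inv G) huc1 huc2)).mp hWeil

end Aux
section Aux2
variable {G : Type*} [Group G] [ts : TopologicalSpace G] [IsTopologicalGroup G]

lemma RP.closure {A : Set G} (hA : RoelckePrecompact A) : RoelckePrecompact (closure A) := by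
  intro V hV
  obtain ⟨V₁, hV₁, hsplit⟩ := exists_nhds_one_split hV
  have h1 : (1 : G) ∈ V₁ := mem_of_mem_nhds hV₁
  have hV₁V : V₁ ⊆ V := fun v hv => by simpa using hsplit v hv 1 h1
  obtain ⟨F, hF⟩ := hA V₁ hV₁
  refine ⟨F, fun x hx => ?_⟩
  obtain ⟨y, hy, hyx⟩ := mem_closure_iff_nhds_one.1 hx V₁⁻¹ (inv_mem_nhds_one G hV₁)
  obtain ⟨u, hu, w, hw, huw⟩ := Set.mem_mul.1 (hF hy)
  obtain ⟨v, hv, g, hg, hvg⟩ := Set.mem_mul.1 hu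
  have hcV : (y / x)⁻¹ ∈ V₁ := Set.mem_inv.1 hyx
  have hxy : (y / x)⁻¹ * y = x := by
    rw [div_eq_mul_inv, mul_inv_rev, inv_inv, mul_assoc, inv_mul_cancel, mul_one]
  refine ⟨(y / x)⁻¹ * v * g, Set.mul_mem_mul (hsplit _ hcV _ hv) hg, w, hV₁V hw, ?_⟩
  rw [← hxy, ← huw, ← hvg]; simp [mul_assoc]

lemma exists_shrinking (u : ℕ → Set G) (hu : ∀ n, u n ∈ nhds 1) :
    ∃ V : ℕ → Set G, (∀ n, V n ∈ nhds 1) ∧ (∀ n, (V n)⁻¹ = V n) ∧ (∀ n, V n ⊆ u n) ∧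
      (∀ n, V (n+1) * V (n+1) * V (n+1) * V (n+1) ⊆ V n) := by
  have key : ∀ S : Set G, S ∈ nhds (1:G) → ∃ T : Set G, T ∈ nhds 1 ∧ T⁻¹ = T ∧ T*T*T*T ⊆ S := by
    intro S hS
    obtain ⟨W, hW, h4⟩ := exists_nhds_one_split4 hS
    refine ⟨W ∩ W⁻¹, Filter.inter_mem hW (inv_mem_nhds_one G hW), by ext x; simp; tauto, ?_⟩
    rintro x ⟨y, ⟨z, ⟨v, hv, w, hw, rfl⟩, t, ht, rfl⟩, s, hs, rfl⟩
    exact h4 hv.1 hw.1 ht.1 hs.1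
  choose! f hf1 hf2 hf3 using key
  have hsub : ∀ S, S ∈ nhds (1:G) → f S ⊆ S := by
    intro S hS x hx
    have h1 : (1:G) ∈ f S := mem_of_mem_nhds (hf1 S hS)
    simpa using hf3 S hS (Set.mul_mem_mul (Set.mul_mem_mul (Set.mul_mem_mul hx h1) h1) h1)
  let V : ℕ → Set G := fun n => Nat.rec (f (u 0)) (fun k Vk => f (Vk ∩ u (k+1))) n
  have hVs : ∀ k, V (k+1) = f (V k ∩ u (k+1)) := fun _ => rfl
  have hmem : ∀ n, V n ∈ nhds (1:G) := by
    intro n; induction n with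
    | zero => exact hf1 _ (hu 0)
    | succ k ih => exact hf1 _ (Filter.inter_mem ih (hu (k+1)))
  have hVu : ∀ n, V n ⊆ u n := by
    intro n; cases n with
    | zero => exact hsub _ (hu 0)
    | succ k => exact Set.Subset.trans (hsub _ (Filter.inter_mem (hmem k) (hu (k+1)))) Set.inter_subset_right
  refine ⟨V, hmem, fun n => ?_, hVu, fun n => ?_⟩
  · cases n with
    | zero => exact hf2 _ (hu 0)
    | succ k => exact hf2 _ (Filter.inter_mem (hmem k) (hu (k+1)))
  · exact (hf3 _ (Filter.inter_mem (hmem n) (hu (n+1)))).trans Set.inter_subset_left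

lemma sandwich {Vn : Set G} (hsym : Vn⁻¹ = Vn) {g x y : G}
    (hx : x ∈ Vn * ({g} : Set G) * Vn) (hy : y ∈ Vn * ({g} : Set G) * Vn) :
    ∃ p ∈ Vn * Vn, ∃ q ∈ Vn * Vn, x = p * y * q := by
  obtain ⟨u, hu, w, hw, rfl⟩ := Set.mem_mul.1 hx
  obtain ⟨v, hv, g', hg', rfl⟩ := Set.mem_mul.1 hu
  obtain ⟨u₂, hu₂, w₂, hw₂, rfl⟩ := Set.mem_mul.1 hy
  obtain ⟨v₂, hv₂, g₂, hg₂, rfl⟩ := Set.mem_mul.1 hu₂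
  rw [Set.mem_singleton_iff] at hg' hg₂; subst hg'; subst hg₂
  have hvi : v₂⁻¹ ∈ Vn := by rw [← hsym]; exact Set.inv_mem_inv.2 hv₂
  have hwi : w₂⁻¹ ∈ Vn := by rw [← hsym]; exact Set.inv_mem_inv.2 hw₂
  exact ⟨v * v₂⁻¹, Set.mul_mem_mul hv hvi, w₂⁻¹ * w, Set.mul_mem_mul hwi hw, by group⟩

end Aux2
section Main
variable {G : Type*} [Group G] [ts : TopologicalSpace G] [IsTopologicalGroup G]

lemma isCompact_closure_of_rp [FirstCountableTopology G]
    (hWeil : @CompleteSpace G (leftUniformity G)) {A : Set G} (hA : RoelckePrecompact A) :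
    IsCompact (_root_.closure A) := by
  have hRcomp : @CompleteSpace G (IsTopologicalGroup.rightUniformSpace G) := completeR hWeil
  have hAc : RoelckePrecompact (_root_.closure A) := RP.closure hA
  rw [isCompact_iff_ultrafilter_le_nhds]
  intro F hFle
  have hAF : _root_.closure A ∈ F := Filter.le_principal_iff.mp hFle
  obtain ⟨u, hu⟩ := (nhds (1:G)).exists_antitone_basis
  have humem : ∀ n, u n ∈ nhds (1:G) := fun n => hu.toHasBasis.mem_of_mem trivial
  obtain ⟨V, hVmem, hVsym, hVu, hV4⟩ := exists_shrinking u humem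
  have h1V : ∀ n, (1:G) ∈ V n := fun n => mem_of_mem_nhds (hVmem n)
  have hVsubVV : ∀ n, V n ⊆ V n * V n := fun n x hx => by
    simpa using Set.mul_mem_mul hx (h1V n)
  have h1VV : ∀ n, (1:G) ∈ V n * V n := fun n => hVsubVV n (h1V n)
  have hVV4 : ∀ n, (V (n+1) * V (n+1)) * (V (n+1) * V (n+1)) ⊆ V n * V n := by
    intro n
    have he : (V (n+1) * V (n+1)) * (V (n+1) * V (n+1))
        = V (n+1) * V (n+1) * V (n+1) * V (n+1) := by rw [← mul_assoc]
    rw [he]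
    exact (hV4 n).trans (hVsubVV n)
  have hVstep : ∀ n, V (n+1) ⊆ V n := fun n x hx => by
    simpa using hV4 n (Set.mul_mem_mul (Set.mul_mem_mul (Set.mul_mem_mul hx (h1V _)) (h1V _)) (h1V _))
  have hVmono : ∀ {n m}, n ≤ m → V m ⊆ V n := by
    intro n m h
    induction h with
    | refl => exact subset_rfl
    | step _ ih => exact (hVstep _).trans ih
  have hVVmono : ∀ {n m}, n ≤ m → V m * V m ⊆ V n * V n :=
    fun h => Set.mul_subset_mul (hVmono h) (hVmono h)
  have hVVsym : ∀ n, (V n * V n)⁻¹ = V n * V n := fun n => by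
    rw [mul_inv_rev, hVsym n]
  have hVVsmall : ∀ N ∈ nhds (1:G), ∃ k, ∀ m, k ≤ m → V m * V m ⊆ N := by
    intro N hN
    obtain ⟨j, -, hj⟩ := hu.toHasBasis.mem_iff.1 hN
    refine ⟨j+1, fun m hm => (hVVmono hm).trans ?_⟩
    have h1 : V (j+1) * V (j+1) ⊆ V j := by
      intro x hx
      obtain ⟨b, hb, c, hc, rfl⟩ := Set.mem_mul.1 hx
      simpa using hV4 j (Set.mul_mem_mul (Set.mul_mem_mul (Set.mul_mem_mul hb hc) (h1V _)) (h1V _))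
    exact h1.trans ((hVu j).trans hj)
  -- choose the finite pieces captured by the ultrafilter
  have hpick : ∀ n, ∃ g : G, _root_.closure A ∩ (V n * ({g} : Set G) * V n) ∈ F := by
    intro n
    obtain ⟨Fn, hFn⟩ := hAc (V n) (hVmem n)
    have hcov : _root_.closure A ⊆
        ⋃ g ∈ (Fn : Set G), _root_.closure A ∩ (V n * ({g} : Set G) * V n) := by
      intro x hx
      obtain ⟨pp, hpp, w, hw, rfl⟩ := Set.mem_mul.1 (hFn hx)
      obtain ⟨v, hv, g, hg, rfl⟩ := Set.mem_mul.1 hpp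
      exact Set.mem_biUnion hg ⟨hx, Set.mul_mem_mul (Set.mul_mem_mul hv rfl) hw⟩
    have hUF : (⋃ g ∈ (Fn : Set G), _root_.closure A ∩ (V n * ({g} : Set G) * V n)) ∈ F :=
      Filter.mem_of_superset hAF hcov
    obtain ⟨g, -, hg⟩ := (Ultrafilter.finite_biUnion_mem_iff Fn.finite_toSet).1 hUF
    exact ⟨g, hg⟩
  choose f hf using hpick
  have hSmem : ∀ n, (⋂ j ∈ Set.Iic n, (_root_.closure A ∩ (V j * ({f j} : Set G) * V j))) ∈ F :=
    fun n => (Filter.biInter_mem (Set.finite_Iic n)).2 (fun j _ => hf j)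
  have hSsubA : ∀ n, (⋂ j ∈ Set.Iic n, (_root_.closure A ∩ (V j * ({f j} : Set G) * V j)))
      ⊆ _root_.closure A := fun n x hx => (Set.mem_iInter₂.1 hx n (Set.mem_Iic.2 le_rfl)).1
  have hSsubV : ∀ j n, j ≤ n →
      (⋂ i ∈ Set.Iic n, (_root_.closure A ∩ (V i * ({f i} : Set G) * V i)))
      ⊆ V j * ({f j} : Set G) * V j :=
    fun j n h x hx => (Set.mem_iInter₂.1 hx j (Set.mem_Iic.2 h)).2
  choose a ha using fun n => Ultrafilter.nonempty_of_mem (hSmem n)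
  have hdec : ∀ n, ∃ pn ∈ V n * V n, ∃ qn ∈ V n * V n, a (n+1) = pn * a n * qn := fun n =>
    sandwich (hVsym n) (hSsubV n (n+1) (Nat.le_succ n) (ha (n+1))) (hSsubV n n le_rfl (ha n))
  choose p hp q hq hpq using hdec
  let Q : ℕ → G := fun n => Nat.rec 1 (fun k Qk => Qk * q k) n
  let P : ℕ → G := fun n => Nat.rec 1 (fun k Pk => p k * Pk) n
  have hQ0 : Q 0 = 1 := rfl
  have hQs : ∀ n, Q (n+1) = Q n * q n := fun _ => rfl
  have hP0 : P 0 = 1 := rfl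
  have hPs : ∀ n, P (n+1) = p n * P n := fun _ => rfl
  have haPQ : ∀ n, a n = P n * a 0 * Q n := by
    intro n
    induction n with
    | zero => simp [hQ0, hP0]
    | succ k ih => rw [hpq k, ih, hPs, hQs]; simp [mul_assoc]
  have hqQ : ∀ n, q n = (Q n)⁻¹ * Q (n+1) := by
    intro n; rw [hQs, ← mul_assoc, inv_mul_cancel, one_mul]
  have hpP : ∀ n, p n = P (n+1) * (P n)⁻¹ := by
    intro n; rw [hPs, mul_assoc, mul_inv_cancel, mul_one]
  have hQtel : ∀ k n, (Q n)⁻¹ * Q (n+k+1) ∈ (V n * V n) * (V n * V n) := by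
    intro k
    induction k with
    | zero =>
      intro n
      have e : (Q n)⁻¹ * Q (n+0+1) = q n := (hqQ n).symm
      rw [e]
      simpa using Set.mul_mem_mul (hq n) (h1VV n)
    | succ k ih =>
      intro n
      have e : (Q n)⁻¹ * Q (n+(k+1)+1) = q n * ((Q (n+1))⁻¹ * Q ((n+1)+k+1)) := by
        rw [show n+(k+1)+1 = (n+1)+k+1 by omega, hqQ n]
        simp [mul_assoc]
      rw [e]
      exact Set.mul_mem_mul (hq n) (hVV4 n (ih (n+1)))
  have hPtel : ∀ k n, P (n+k+1) * (P n)⁻¹ ∈ (V n * V n) * (V n * V n) := by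
    intro k
    induction k with
    | zero =>
      intro n
      have e : P (n+0+1) * (P n)⁻¹ = p n := (hpP n).symm
      rw [e]
      simpa using Set.mul_mem_mul (h1VV n) (hp n)
    | succ k ih =>
      intro n
      have e : P (n+(k+1)+1) * (P n)⁻¹ = (P ((n+1)+k+1) * (P (n+1))⁻¹) * p n := by
        rw [show n+(k+1)+1 = (n+1)+k+1 by omega, hpP n]
        simp [mul_assoc]
      rw [e]
      exact Set.mul_mem_mul (hVV4 n (ih (n+1))) (hp n)
  have hQgen : ∀ {n m}, n < m → (Q n)⁻¹ * Q m ∈ (V n * V n) * (V n * V n) := by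
    intro n m h
    obtain ⟨k, rfl⟩ : ∃ k, m = n + k + 1 := ⟨m - n - 1, by omega⟩
    exact hQtel _ n
  have hPgen : ∀ {n m}, n < m → P m * (P n)⁻¹ ∈ (V n * V n) * (V n * V n) := by
    intro n m h
    obtain ⟨k, rfl⟩ : ∃ k, m = n + k + 1 := ⟨m - n - 1, by omega⟩
    exact hPtel _ n
  -- Cauchy sequences
  have hbig : ∀ N ∈ nhds (1:G), ∃ k, ∀ m, k ≤ m →
      (V m * V m) * (V m * V m) ⊆ N := by
    intro N hN
    obtain ⟨k, hk⟩ := hVVsmall N hN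
    refine ⟨k+1, fun m hm => ?_⟩
    obtain ⟨m', rfl⟩ : ∃ m', m = m' + 1 := ⟨m - 1, by omega⟩
    exact (hVV4 m').trans (hk m' (by omega))
  have hQc : @CauchySeq G ℕ (leftUniformity G) _ Q := by
    refine (@cauchySeq_iff G (leftUniformity G) Q).2 ?_
    intro E hE
    obtain ⟨N, hN, hNE⟩ := Filter.mem_comap.1 (uL_eq (G := G) ▸ hE)
    have hNN : N ∩ N⁻¹ ∈ nhds (1:G) := Filter.inter_mem hN (inv_mem_nhds_one G hN)
    obtain ⟨k, hk⟩ := hbig _ hNN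
    refine ⟨k, fun i hi j hj => ?_⟩
    apply hNE
    show (Q j)⁻¹ * Q i ∈ N
    rcases lt_trichotomy i j with h | h | h
    · have h2 : (Q i)⁻¹ * Q j ∈ N⁻¹ := (hk i hi (hQgen h)).2
      have e : (Q j)⁻¹ * Q i = ((Q i)⁻¹ * Q j)⁻¹ := by simp [mul_inv_rev]
      rw [e]
      exact Set.mem_inv.1 h2
    · rw [h, inv_mul_cancel]
      exact mem_of_mem_nhds hN
    · exact (hk j hj (hQgen h)).1
  have hPc : @CauchySeq G ℕ (IsTopologicalGroup.rightUniformSpace G) _ P := by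
    refine (@cauchySeq_iff G (IsTopologicalGroup.rightUniformSpace G) P).2 ?_
    intro E hE
    obtain ⟨N, hN, hNE⟩ := Filter.mem_comap.1 (uR_eq (G := G) ▸ hE)
    have hNN : N ∩ N⁻¹ ∈ nhds (1:G) := Filter.inter_mem hN (inv_mem_nhds_one G hN)
    obtain ⟨k, hk⟩ := hbig _ hNN
    refine ⟨k, fun i hi j hj => ?_⟩
    apply hNE
    show P j / P i ∈ N
    rw [div_eq_mul_inv]
    rcases lt_trichotomy i j with h | h | h
    · exact (hk i hi (hPgen h)).1
    · rw [h, mul_inv_cancel]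
      exact mem_of_mem_nhds hN
    · have h2 : P i * (P j)⁻¹ ∈ N⁻¹ := (hk j hj (hPgen h)).2
      have e : P j * (P i)⁻¹ = (P i * (P j)⁻¹)⁻¹ := by simp [mul_inv_rev]
      rw [e]
      exact Set.mem_inv.1 h2
  -- limits
  obtain ⟨Ql, hQl⟩ := @cauchySeq_tendsto_of_complete G ℕ (leftUniformity G) _ hWeil Q hQc
  obtain ⟨Pl, hPl⟩ := @cauchySeq_tendsto_of_complete G ℕ (IsTopologicalGroup.rightUniformSpace G) _
    hRcomp P hPc
  rw [topL_eq] at hQl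
  rw [topR_eq] at hPl
  have halim : Filter.Tendsto a Filter.atTop (nhds (Pl * a 0 * Ql)) := by
    have h1 : Filter.Tendsto (fun n => P n * a 0 * Q n) Filter.atTop (nhds (Pl * a 0 * Ql)) :=
      (hPl.mul tendsto_const_nhds).mul hQl
    exact h1.congr (fun n => (haPQ n).symm)
  refine ⟨Pl * a 0 * Ql, isClosed_closure.mem_of_tendsto halim
    (Filter.Eventually.of_forall (fun n => hSsubA n (ha n))), ?_⟩
  set l := Pl * a 0 * Ql with hldef
  refine Filter.le_def.2 fun O hO => ?_
  have hc : ContinuousAt (fun z : G × G => z.1 * l * z.2) (1, 1) := by fun_prop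
  have hpre : (fun z : G × G => z.1 * l * z.2) ⁻¹' O ∈ nhds ((1:G), (1:G)) :=
    hc.preimage_mem_nhds (by simpa using hO)
  rw [mem_nhds_prod_iff] at hpre
  obtain ⟨N₁, hN₁, N₂, hN₂, hN⟩ := hpre
  obtain ⟨N₂', hN₂', hsplit2⟩ := exists_nhds_one_split hN₂
  obtain ⟨k₀, hk₀⟩ := hVVsmall (N₁ ∩ N₂') (Filter.inter_mem hN₁ hN₂')
  have htail : ∀ᶠ n in Filter.atTop, l⁻¹ * a n ∈ N₂' := by
    have h2 : Filter.Tendsto (fun n => l⁻¹ * a n) Filter.atTop (nhds (l⁻¹ * l)) :=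
      tendsto_const_nhds.mul halim
    rw [inv_mul_cancel] at h2
    exact h2.eventually_mem hN₂'
  obtain ⟨k₁, hk₁⟩ := Filter.eventually_atTop.1 htail
  set m := max k₀ k₁ with hm
  have hSm : (⋂ i ∈ Set.Iic m, (_root_.closure A ∩ (V i * ({f i} : Set G) * V i))) ⊆ O := by
    intro x hx
    obtain ⟨p', hp', q', hq', hxe⟩ :=
      sandwich (hVsym m) (hSsubV m m le_rfl hx) (hSsubV m m le_rfl (ha m))
    have hVVm : V m * V m ⊆ N₁ ∩ N₂' := hk₀ m (le_max_left _ _)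
    have ham : l⁻¹ * a m ∈ N₂' := hk₁ m (le_max_right _ _)
    have hmem : (p', (l⁻¹ * a m) * q') ∈ N₁ ×ˢ N₂ :=
      ⟨(hVVm hp').1, hsplit2 _ ham _ ((hVVm hq').2)⟩
    have hOx : p' * l * ((l⁻¹ * a m) * q') ∈ O := hN hmem
    have hxx : x = p' * l * ((l⁻¹ * a m) * q') := by
      rw [hxe]; simp [mul_assoc]
    rwa [hxx]
  exact Filter.mem_of_superset (hSmem m) hSm

end Main
/-- In a Weil complete Polish group (one complete in its left uniformity), the product of
two Roelcke precompact subsets is Roelcke precompact. -/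
theorem roelckePrecompact_mul_of_weilComplete
    {G : Type*} [Group G] [TopologicalSpace G] [IsTopologicalGroup G] [PolishSpace G]
    (hWeil : @CompleteSpace G (leftUniformity G))
    (A B : Set G) (hA : RoelckePrecompact A) (hB : RoelckePrecompact B) :
    RoelckePrecompact (A * B) := by
  have hcA : IsCompact (closure A) := isCompact_closure_of_rp hWeil hA
  have hcB : IsCompact (closure B) := isCompact_closure_of_rp hWeil hB
  exact RP.mono (Set.mul_subset_mul subset_closure subset_closure)
    (hcA.mul hcB).roelckePrecompact
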